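/- Let A be a d×d real matrix with strictly positive entries whose columns each sum to 1, and let r ∈ ℝ^d satisfy r_n > 0 for all n and Σ_n r_n = 1. Then there exists a unique pair of vectors u, v ∈ ℝ^d with Σ_n v_n = 0 such that the matrix T with entries T_{mn} = e^{u_m + v_n} A_{mn} satisfies T·𝟙 = d·r and Σ_m T_{mn} = 1 for every n (i.e., T is column-stochastic with normalized row-sum vector r). -/

import Mathlib

open Matrix Real Finset


noncomputable def Fobj (d : ℕ) (A : Matrix (Fin d) (Fin d) ℝ) (r : Fin d → ℝ)
    (p : (Fin d → ℝ) × (Fin d → ℝ)) : ℝ :=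
  (∑ m, ∑ n, Real.exp (p.1 m + p.2 n) * A m n) - d * ∑ m, r m * p.1 m

lemma hasDerivAt_line (c k : ℝ) : HasDerivAt (fun t : ℝ => c + t * k) k 0 := by
  simpa using ((hasDerivAt_id (0:ℝ)).mul_const k).const_add c

lemma hasDerivAt_Fobj (d : ℕ) (A : Matrix (Fin d) (Fin d) ℝ) (r : Fin d → ℝ)
    (u v w₁ w₂ : Fin d → ℝ) :
    HasDerivAt (fun t => Fobj d A r (fun m => u m + t * w₁ m, fun n => v n + t * w₂ n))
      ((∑ m, ∑ n, (w₁ m + w₂ n) * (Real.exp (u m + v n) * A m n)) - d * ∑ m, r m * w₁ m) 0 := by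
  unfold Fobj
  dsimp only
  apply HasDerivAt.sub
  · apply HasDerivAt.fun_sum
    intro m _
    apply HasDerivAt.fun_sum
    intro n _
    have h : HasDerivAt (fun t : ℝ => (u m + t * w₁ m) + (v n + t * w₂ n)) (w₁ m + w₂ n) 0 :=
      (hasDerivAt_line (u m) (w₁ m)).add (hasDerivAt_line (v n) (w₂ n))
    have := (h.exp).mul_const (A m n)
    simpa [mul_comm, mul_assoc, mul_left_comm] using this
  · have : HasDerivAt (fun t : ℝ => ∑ m, r m * (u m + t * w₁ m)) (∑ m, r m * w₁ m) 0 := by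
      apply HasDerivAt.fun_sum
      intro m _
      exact (hasDerivAt_line (u m) (w₁ m)).const_mul (r m)
    exact this.const_mul (d : ℝ)

lemma sinkhorn_exists (d : ℕ) (hd : 1 ≤ d) (A : Matrix (Fin d) (Fin d) ℝ)
    (hApos : ∀ m n, 0 < A m n) (hAcol : ∀ n, ∑ m, A m n = 1)
    (r : Fin d → ℝ) (hr : ∀ n, 0 < r n) (hrsum : ∑ n, r n = 1) :
    ∃ u v : Fin d → ℝ, (∑ n, v n = 0) ∧
      (∀ m, ∑ n, Real.exp (u m + v n) * A m n = d * r m) ∧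
      (∀ n, ∑ m, Real.exp (u m + v n) * A m n = 1) := by
  haveI : NeZero d := ⟨Nat.one_le_iff_ne_zero.1 hd⟩
  have hdpos : (0:ℝ) < d := by exact_mod_cast hd
  -- minimal entries
  obtain ⟨⟨ma, na⟩, -, hamin⟩ := Finset.exists_min_image (Finset.univ ×ˢ Finset.univ)
    (fun q : Fin d × Fin d => A q.1 q.2) ⟨(0,0), by simp⟩
  set a := A ma na with ha
  have hapos : 0 < a := hApos ma na
  have haA : ∀ m n, a ≤ A m n := fun m n => hamin (m, n) (by simp)
  obtain ⟨mr, -, hrmin⟩ := Finset.exists_min_image Finset.univ r ⟨0, Finset.mem_univ 0⟩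
  set ρ := r mr with hρ
  have hρpos : 0 < ρ := hr mr
  have hρr : ∀ m, ρ ≤ r m := fun m => hrmin m (Finset.mem_univ m)
  have hr1 : ∀ m, r m ≤ 1 := by
    intro m
    have h := Finset.single_le_sum (f := r) (fun n _ => (hr n).le) (Finset.mem_univ m)
    rw [hrsum] at h; exact h
  set C : ℝ := ((d:ℝ) + d*ρ)^2 / a with hC
  have hC0 : 0 ≤ C := div_nonneg (sq_nonneg _) hapos.le
  have hCa : C * a = ((d:ℝ) + d*ρ)^2 := div_mul_cancel₀ _ hapos.ne'
  -- max of v is nonneg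
  have vmax : ∀ v : Fin d → ℝ, (∑ n, v n = 0) → ∃ n₁, 0 ≤ v n₁ ∧ ∀ n, v n ≤ v n₁ := by
    intro v hv
    obtain ⟨n₁, -, hmax⟩ := Finset.exists_max_image Finset.univ v ⟨0, Finset.mem_univ 0⟩
    refine ⟨n₁, ?_, fun n => hmax n (Finset.mem_univ n)⟩
    by_contra h
    push_neg at h
    have hlt : ∑ n, v n < 0 := by
      calc ∑ n, v n ≤ ∑ _n : Fin d, v n₁ := Finset.sum_le_sum fun n _ => hmax n (Finset.mem_univ n)
        _ = d * v n₁ := by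
            rw [Finset.sum_const, Finset.card_univ, Fintype.card_fin, nsmul_eq_mul]
        _ < 0 := mul_neg_of_pos_of_neg hdpos h
    rw [hv] at hlt
    exact lt_irrefl 0 hlt
  -- each column sum is at least a * exp (u m + v n₁)
  have sumge : ∀ (u v : Fin d → ℝ) (m n₁ : Fin d),
      a * Real.exp (u m + v n₁) ≤ ∑ n, Real.exp (u m + v n) * A m n := by
    intro u v m n₁
    have hterm : a * Real.exp (u m + v n₁) ≤ Real.exp (u m + v n₁) * A m n₁ := by
      rw [mul_comm]
      exact mul_le_mul_of_nonneg_left (haA m n₁) (Real.exp_pos _).le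
    exact le_trans hterm (Finset.single_le_sum
      (f := fun n => Real.exp (u m + v n) * A m n)
      (fun n _ => mul_nonneg (Real.exp_pos _).le (hApos m n).le) (Finset.mem_univ n₁))
  -- bracket estimate
  have bracket : ∀ (u v : Fin d → ℝ), (∑ n, v n = 0) → ∀ m,
      (d:ℝ)*ρ*|u m| - C ≤ (∑ n, Real.exp (u m + v n) * A m n) - d * (r m * u m) := by
    intro u v hv m
    obtain ⟨n₁, hV0, -⟩ := vmax v hv
    have h1 : a * Real.exp (u m) ≤ ∑ n, Real.exp (u m + v n) * A m n := by
      refine le_trans ?_ (sumge u v m n₁)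
      have h := Real.exp_le_exp.2 (by linarith : u m ≤ u m + v n₁)
      exact mul_le_mul_of_nonneg_left h hapos.le
    rcases le_or_gt 0 (u m) with hum | hum
    · rw [abs_of_nonneg hum]
      have h3 : u m / 2 + 1 ≤ Real.exp (u m / 2) := Real.add_one_le_exp _
      have h3' : (0:ℝ) ≤ u m / 2 + 1 := by linarith
      have hsq : (u m / 2 + 1)^2 ≤ (Real.exp (u m / 2))^2 := by nlinarith [Real.exp_pos (u m / 2)]
      have h2 : (Real.exp (u m / 2))^2 = Real.exp (u m) := by
        rw [sq, ← Real.exp_add]; ring_nf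
      have hrm := hρr m
      have hrm1 := hr1 m
      have hsq' : (u m / 2 + 1)^2 ≤ Real.exp (u m) := h2 ▸ hsq
      have hP : a * (u m / 2 + 1)^2 ≤ ∑ n, Real.exp (u m + v n) * A m n :=
        le_trans (mul_le_mul_of_nonneg_left hsq' hapos.le) h1
      have hexp2 : a * (u m / 2 + 1)^2 = a * (u m)^2/4 + a * u m + a := by ring
      have hq : ((d:ℝ)+d*ρ) * u m - C ≤ a * (u m)^2/4 := by
        nlinarith [sq_nonneg (a * u m - 2*((d:ℝ)+d*ρ))]
      have hdru := mul_le_mul_of_nonneg_left (mul_le_mul_of_nonneg_right hrm1 hum) hdpos.le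
      have hau : 0 ≤ a * u m := mul_nonneg hapos.le hum
      linarith [hP, hq, hdru, hau, hapos.le, hexp2]
    · rw [abs_of_neg hum]
      have hspos : 0 < ∑ n, Real.exp (u m + v n) * A m n :=
        lt_of_lt_of_le (by positivity) h1
      have hfac : (0:ℝ) ≤ (d:ℝ) * (r m - ρ) * (-(u m)) :=
        mul_nonneg (mul_nonneg hdpos.le (by linarith [hρr m])) (by linarith)
      nlinarith
  -- F as a sum of brackets
  have Fsum : ∀ u v : Fin d → ℝ, Fobj d A r (u, v)
      = ∑ m, ((∑ n, Real.exp (u m + v n) * A m n) - (d:ℝ) * (r m * u m)) := by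
    intro u v
    unfold Fobj
    rw [Finset.sum_sub_distrib, Finset.mul_sum]
  -- global lower bound (i)
  have lower : ∀ u v : Fin d → ℝ, (∑ n, v n = 0) →
      (d:ℝ)*ρ * (∑ m, |u m|) - d*C ≤ Fobj d A r (u, v) := by
    intro u v hv
    rw [Fsum]
    calc (d:ℝ)*ρ * (∑ m, |u m|) - d*C = ∑ m, ((d:ℝ)*ρ*|u m| - C) := by
          rw [Finset.sum_sub_distrib, ← Finset.mul_sum]
          simp [Finset.sum_const, Finset.card_univ, mul_comm]
      _ ≤ _ := Finset.sum_le_sum fun m _ => bracket u v hv m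
  set c : ℝ := Fobj d A r (0, 0) with hc
  set B₁ : ℝ := (c + d*C) / ((d:ℝ)*ρ) with hB₁
  -- u-bound on the sublevel set
  have ubound : ∀ u v : Fin d → ℝ, (∑ n, v n = 0) → Fobj d A r (u, v) ≤ c →
      ∀ m, |u m| ≤ B₁ := by
    intro u v hv hFle m
    have h1 := lower u v hv
    have h2 : |u m| ≤ ∑ m', |u m'| :=
      Finset.single_le_sum (f := fun m' => |u m'|) (fun m' _ => abs_nonneg _) (Finset.mem_univ m)
    rw [hB₁, le_div_iff₀ (by positivity)]
    nlinarith [mul_le_mul_of_nonneg_left h2 (by positivity : (0:ℝ) ≤ (d:ℝ)*ρ)]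
  have hB₁0 : 0 ≤ B₁ := by
    have := ubound 0 0 (by simp) (le_refl _) 0
    simpa using le_trans (abs_nonneg _) this
  set B₂ : ℝ := Real.log ((c + d*B₁ + d*C)/a) + B₁ with hB₂
  set B₃ : ℝ := d * max B₂ 0 with hB₃
  have hB₃0 : 0 ≤ B₃ := mul_nonneg hdpos.le (le_max_right _ _)
  -- v-bound on the sublevel set
  have vbound : ∀ u v : Fin d → ℝ, (∑ n, v n = 0) → Fobj d A r (u, v) ≤ c →
      ∀ n, |v n| ≤ B₃ := by
    intro u v hv hFle
    obtain ⟨n₁, hV0, hVmax⟩ := vmax v hv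
    have hu0 := ubound u v hv hFle 0
    -- key lower bound isolating coordinate 0
    have key : a * Real.exp (v n₁ - B₁) - d*B₁ - d*C ≤ Fobj d A r (u, v) := by
      rw [Fsum, ← Finset.add_sum_erase _ _ (Finset.mem_univ (0 : Fin d))]
      have h1 : a * Real.exp (v n₁ - B₁) - d * B₁
          ≤ (∑ n, Real.exp (u 0 + v n) * A 0 n) - (d:ℝ) * (r 0 * u 0) := by
        have e1 : a * Real.exp (v n₁ - B₁) ≤ a * Real.exp (u 0 + v n₁) := by
          have : v n₁ - B₁ ≤ u 0 + v n₁ := by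
            have := abs_le.1 hu0; linarith [this.1]
          exact mul_le_mul_of_nonneg_left (Real.exp_le_exp.2 this) hapos.le
        have e2 := sumge u v 0 n₁
        have habs := abs_le.1 hu0
        have e3a : r 0 * u 0 ≤ r 0 * B₁ := mul_le_mul_of_nonneg_left habs.2 (hr 0).le
        have e3b : r 0 * B₁ ≤ 1 * B₁ := mul_le_mul_of_nonneg_right (hr1 0) hB₁0
        have e3 : (d:ℝ) * (r 0 * u 0) ≤ d * B₁ :=
          le_trans (mul_le_mul_of_nonneg_left (by linarith : r 0 * u 0 ≤ B₁) hdpos.le)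
            (by linarith)
        linarith
      have h2 : -((d:ℝ) - 1) * C ≤ ∑ m ∈ Finset.univ.erase (0 : Fin d),
          ((∑ n, Real.exp (u m + v n) * A m n) - (d:ℝ) * (r m * u m)) := by
        have := Finset.sum_le_sum (fun m (_ : m ∈ Finset.univ.erase (0 : Fin d)) =>
          bracket u v hv m)
        have hcard : (Finset.univ.erase (0 : Fin d)).card = d - 1 := by
          rw [Finset.card_erase_of_mem (Finset.mem_univ _)]; simp
        have hlow : ∑ m ∈ Finset.univ.erase (0 : Fin d), (-C)
            ≤ ∑ m ∈ Finset.univ.erase (0 : Fin d), ((d:ℝ)*ρ*|u m| - C) := by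
          apply Finset.sum_le_sum
          intro m _
          have := mul_nonneg (mul_nonneg hdpos.le hρpos.le) (abs_nonneg (u m))
          linarith
        rw [Finset.sum_const, hcard, nsmul_eq_mul] at hlow
        have hcast : ((d - 1 : ℕ) : ℝ) = (d:ℝ) - 1 := by
          rw [Nat.cast_sub hd, Nat.cast_one]
        rw [hcast] at hlow
        calc -((d:ℝ) - 1) * C = ((d:ℝ) - 1) * (-C) := by ring
          _ ≤ _ := le_trans hlow this
      linarith [hC0]
    -- deduce v n₁ ≤ B₂
    have hVle : v n₁ ≤ B₂ := by
      have hM : a * Real.exp (v n₁ - B₁) ≤ c + d*B₁ + d*C := by linarith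
      have hMpos : 0 < c + d*B₁ + d*C :=
        lt_of_lt_of_le (mul_pos hapos (Real.exp_pos _)) hM
      have hexp : Real.exp (v n₁ - B₁) ≤ (c + d*B₁ + d*C)/a := by
        rw [le_div_iff₀ hapos]; linarith [hM]
      have := Real.log_le_log (Real.exp_pos _) hexp
      rw [Real.log_exp] at this
      rw [hB₂]; linarith
    intro n
    have hup : v n ≤ B₃ := by
      have h1 : v n ≤ v n₁ := hVmax n
      have h2 : v n₁ ≤ max B₂ 0 := le_trans hVle (le_max_left _ _)
      have hd1 : (1:ℝ) ≤ d := by exact_mod_cast hd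
      have : max B₂ 0 ≤ (d:ℝ) * max B₂ 0 :=
        le_mul_of_one_le_left (le_max_right _ _) hd1
      rw [hB₃]; linarith
    have hdown : -B₃ ≤ v n := by
      have hsplit : v n + ∑ k ∈ Finset.univ.erase n, v k = 0 := by
        rw [Finset.add_sum_erase _ _ (Finset.mem_univ n)]; exact hv
      have hle : ∑ k ∈ Finset.univ.erase n, v k ≤ ((d:ℝ) - 1) * v n₁ := by
        have := Finset.sum_le_sum (fun k (_ : k ∈ Finset.univ.erase n) => hVmax k)
        rw [Finset.sum_const, Finset.card_erase_of_mem (Finset.mem_univ _)] at this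
        have hcast : ((Finset.univ : Finset (Fin d)).card - 1 : ℕ) • v n₁ = ((d:ℝ) - 1) * v n₁ := by
          rw [Finset.card_univ, Fintype.card_fin, nsmul_eq_mul, Nat.cast_sub hd, Nat.cast_one]
        rw [hcast] at this
        exact this
      have h2 : v n₁ ≤ max B₂ 0 := le_trans hVle (le_max_left _ _)
      have hd1 : (1:ℝ) ≤ d := by exact_mod_cast hd
      have h3 : ((d:ℝ) - 1) * v n₁ ≤ ((d:ℝ) - 1) * max B₂ 0 :=
        mul_le_mul_of_nonneg_left h2 (by linarith)
      have h4 : ((d:ℝ) - 1) * max B₂ 0 ≤ (d:ℝ) * max B₂ 0 :=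
        mul_le_mul_of_nonneg_right (by linarith) (le_max_right _ _)
      rw [hB₃]
      linarith [hle, hsplit, h3, h4]
    rw [abs_le]; exact ⟨hdown, hup⟩
  -- global setup for minimization
  set R : ℝ := max B₁ B₃ with hR
  have hR0 : 0 ≤ R := le_trans hB₁0 (le_max_left _ _)
  set S : Set ((Fin d → ℝ) × (Fin d → ℝ)) := {p | ∑ n, p.2 n = 0} with hSdef
  have hball : ∀ p : (Fin d → ℝ) × (Fin d → ℝ), p ∈ S → Fobj d A r p ≤ c → ‖p‖ ≤ R := by
    intro p hp hle
    obtain ⟨u, v⟩ := p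
    simp only [hSdef, Set.mem_setOf_eq] at hp
    have hu := ubound u v hp hle
    have hvb := vbound u v hp hle
    rw [Prod.norm_def]
    apply max_le
    · rw [pi_norm_le_iff_of_nonneg hR0]
      intro m; rw [Real.norm_eq_abs]
      exact le_trans (hu m) (le_max_left _ _)
    · rw [pi_norm_le_iff_of_nonneg hR0]
      intro n; rw [Real.norm_eq_abs]
      exact le_trans (hvb n) (le_max_right _ _)
  have hScl : IsClosed S := isClosed_eq (by
      apply continuous_finset_sum
      intro n _
      exact (continuous_apply n).comp continuous_snd) continuous_const
  have hFcont : Continuous (Fobj d A r) := by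
    unfold Fobj
    apply Continuous.sub
    · apply continuous_finset_sum; intro m _
      apply continuous_finset_sum; intro n _
      exact (Real.continuous_exp.comp (((continuous_apply m).comp continuous_fst).add
        ((continuous_apply n).comp continuous_snd))).mul continuous_const
    · exact continuous_const.mul (continuous_finset_sum _ fun m _ =>
        continuous_const.mul ((continuous_apply m).comp continuous_fst))
  set K := S ∩ Metric.closedBall (0 : (Fin d → ℝ) × (Fin d → ℝ)) R with hK
  have h0S : ((0 : Fin d → ℝ), (0 : Fin d → ℝ)) ∈ S := by simp [hSdef]
  have h0K : ((0 : Fin d → ℝ), (0 : Fin d → ℝ)) ∈ K := by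
    refine ⟨h0S, ?_⟩
    rw [mem_closedBall_zero_iff]
    show ‖((0,0) : (Fin d → ℝ) × (Fin d → ℝ))‖ ≤ R
    rw [Prod.norm_def]
    simp [hR0]
  have hKc : IsCompact K := (isCompact_closedBall _ _).inter_left hScl
  obtain ⟨x₀, hx₀K, hx₀min⟩ := hKc.exists_isMinOn ⟨_, h0K⟩ hFcont.continuousOn
  have hx0c : Fobj d A r x₀ ≤ c := by rw [hc]; exact isMinOn_iff.1 hx₀min _ h0K
  have hglobal : ∀ p ∈ S, Fobj d A r x₀ ≤ Fobj d A r p := by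
    intro p hp
    rcases le_or_gt c (Fobj d A r p) with h | h
    · exact le_trans hx0c h
    · exact isMinOn_iff.1 hx₀min p ⟨hp, by rw [mem_closedBall_zero_iff]; exact hball p hp h.le⟩
  obtain ⟨u, v⟩ := x₀
  have hv : ∑ n, v n = 0 := hx₀K.1
  have derivzero : ∀ w₁ w₂ : Fin d → ℝ, (∑ n, w₂ n = 0) →
      (∑ m, ∑ n, (w₁ m + w₂ n) * (Real.exp (u m + v n) * A m n)) - d * ∑ m, r m * w₁ m = 0 := by
    intro w₁ w₂ hw₂
    have hD := hasDerivAt_Fobj d A r u v w₁ w₂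
    have hmin : IsLocalMin
        (fun t => Fobj d A r (fun m => u m + t * w₁ m, fun n => v n + t * w₂ n)) 0 := by
      apply Filter.Eventually.of_forall
      intro t
      have hmem : ((fun m => u m + t * w₁ m, fun n => v n + t * w₂ n) :
          (Fin d → ℝ) × (Fin d → ℝ)) ∈ S := by
        simp only [hSdef, Set.mem_setOf_eq]
        rw [Finset.sum_add_distrib, hv, ← Finset.mul_sum, hw₂, mul_zero, add_zero]
      have h0 : ((fun m => u m + 0 * w₁ m, fun n => v n + 0 * w₂ n) :
          (Fin d → ℝ) × (Fin d → ℝ)) = (u, v) := by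
        refine Prod.ext ?_ ?_ <;> funext i <;> simp
      show Fobj d A r (fun m => u m + 0 * w₁ m, fun n => v n + 0 * w₂ n) ≤ _
      rw [h0]
      exact hglobal _ hmem
    have hz := hmin.deriv_eq_zero
    rwa [hD.deriv] at hz
  have row : ∀ m, ∑ n, Real.exp (u m + v n) * A m n = d * r m := by
    intro m
    have h := derivzero (fun m' => if m' = m then 1 else 0) 0 (by simp)
    simp only [Pi.zero_apply, add_zero, ite_mul, one_mul, zero_mul, mul_ite, mul_one, mul_zero,
      Finset.sum_ite_irrel, Finset.sum_const_zero, Finset.sum_ite_eq', Finset.mem_univ,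
      if_true] at h
    linarith
  have colconst : ∀ n n' : Fin d,
      (∑ m, Real.exp (u m + v n) * A m n) = ∑ m, Real.exp (u m + v n') * A m n' := by
    intro n n'
    have h := derivzero 0 (fun k => (if k = n then (1:ℝ) else 0) - (if k = n' then 1 else 0))
      (by simp [Finset.sum_sub_distrib])
    simp only [Pi.zero_apply, zero_add, mul_zero, Finset.sum_const_zero, sub_zero,
      sub_mul, ite_mul, one_mul, zero_mul, Finset.sum_sub_distrib, Finset.sum_ite_irrel,
      Finset.sum_ite_eq', Finset.mem_univ, if_true] at h
    linarith
  have coltotal : ∑ n, ∑ m, Real.exp (u m + v n) * A m n = d := by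
    rw [Finset.sum_comm]
    calc ∑ m, ∑ n, Real.exp (u m + v n) * A m n = ∑ m, (d:ℝ) * r m :=
          Finset.sum_congr rfl fun m _ => row m
      _ = d := by rw [← Finset.mul_sum, hrsum, mul_one]
  refine ⟨u, v, hv, row, ?_⟩
  intro n
  have h1 : ∑ n' : Fin d, ∑ m, Real.exp (u m + v n') * A m n'
      = ∑ _n' : Fin d, ∑ m, Real.exp (u m + v n) * A m n :=
    Finset.sum_congr rfl fun n' _ => colconst n' n
  rw [coltotal, Finset.sum_const, Finset.card_univ, Fintype.card_fin, nsmul_eq_mul] at h1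
  have h2 : (d:ℝ) * 1 = (d:ℝ) * ∑ m, Real.exp (u m + v n) * A m n := by
    rw [mul_one]; exact h1
  exact (mul_left_cancel₀ hdpos.ne' h2).symm


lemma scalar_key {x y : ℝ} : (y - x) * (Real.exp x - Real.exp y) ≤ 0 := by
  rcases le_total x y with h | h
  · exact mul_nonpos_of_nonneg_of_nonpos (by linarith)
      (by have := Real.exp_le_exp.2 h; linarith)
  · exact mul_nonpos_of_nonpos_of_nonneg (by linarith)
      (by have := Real.exp_le_exp.2 h; linarith)

lemma scalar_key_eq {x y : ℝ} (h : (y - x) * (Real.exp x - Real.exp y) = 0) : x = y := by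
  by_contra h'
  rcases Ne.lt_or_gt h' with hlt | hgt
  · have h2 : Real.exp x - Real.exp y < 0 := by have := Real.exp_lt_exp.2 hlt; linarith
    exact (mul_neg_of_pos_of_neg (by linarith) h2).ne h
  · have h2 : 0 < Real.exp x - Real.exp y := by have := Real.exp_lt_exp.2 hgt; linarith
    exact (mul_neg_of_neg_of_pos (by linarith) h2).ne h

lemma sinkhorn_unique (d : ℕ) (hd : 1 ≤ d) (A : Matrix (Fin d) (Fin d) ℝ)
    (hApos : ∀ m n, 0 < A m n) (r : Fin d → ℝ)
    (u v u' v' : Fin d → ℝ)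
    (hv : ∑ n, v n = 0) (hv' : ∑ n, v' n = 0)
    (hrow : ∀ m, ∑ n, Real.exp (u m + v n) * A m n = d * r m)
    (hrow' : ∀ m, ∑ n, Real.exp (u' m + v' n) * A m n = d * r m)
    (hcol : ∀ n, ∑ m, Real.exp (u m + v n) * A m n = 1)
    (hcol' : ∀ n, ∑ m, Real.exp (u' m + v' n) * A m n = 1) :
    u = u' ∧ v = v' := by
  have key1 : ∑ m, ∑ n, ((u' m - u m) + (v' n - v n)) * (Real.exp (u m + v n) * A m n)
      = ∑ m, (u' m - u m) * (d * r m) := by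
    have hexp : ∀ m n, ((u' m - u m) + (v' n - v n)) * (Real.exp (u m + v n) * A m n)
        = (u' m - u m) * (Real.exp (u m + v n) * A m n)
          + (v' n - v n) * (Real.exp (u m + v n) * A m n) := fun m n => by ring
    simp only [hexp, Finset.sum_add_distrib]
    have e2 : ∑ m, ∑ n, (v' n - v n) * (Real.exp (u m + v n) * A m n) = 0 := by
      rw [Finset.sum_comm]
      have : ∀ n, ∑ m, (v' n - v n) * (Real.exp (u m + v n) * A m n)
          = (v' n - v n) := by
        intro n; rw [← Finset.mul_sum, hcol n, mul_one]
      simp only [this, Finset.sum_sub_distrib, hv, hv', sub_zero]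
    rw [e2, add_zero]
    exact Finset.sum_congr rfl fun m _ => by rw [← Finset.mul_sum, hrow m]
  have key2 : ∑ m, ∑ n, ((u m - u' m) + (v n - v' n)) * (Real.exp (u' m + v' n) * A m n)
      = ∑ m, (u m - u' m) * (d * r m) := by
    have hexp : ∀ m n, ((u m - u' m) + (v n - v' n)) * (Real.exp (u' m + v' n) * A m n)
        = (u m - u' m) * (Real.exp (u' m + v' n) * A m n)
          + (v n - v' n) * (Real.exp (u' m + v' n) * A m n) := fun m n => by ring
    simp only [hexp, Finset.sum_add_distrib]
    have e2 : ∑ m, ∑ n, (v n - v' n) * (Real.exp (u' m + v' n) * A m n) = 0 := by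
      rw [Finset.sum_comm]
      have : ∀ n, ∑ m, (v n - v' n) * (Real.exp (u' m + v' n) * A m n)
          = (v n - v' n) := by
        intro n; rw [← Finset.mul_sum, hcol' n, mul_one]
      simp only [this, Finset.sum_sub_distrib, hv, hv', sub_zero]
    rw [e2, add_zero]
    exact Finset.sum_congr rfl fun m _ => by rw [← Finset.mul_sum, hrow' m]
  set T : Fin d → Fin d → ℝ := fun m n =>
    -((((u' m + v' n) - (u m + v n)) * (Real.exp (u m + v n) - Real.exp (u' m + v' n))) * A m n)
    with hT
  have hTnonneg : ∀ m n, 0 ≤ T m n := by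
    intro m n
    have h1 := scalar_key (x := u m + v n) (y := u' m + v' n)
    have h2 := mul_nonpos_of_nonpos_of_nonneg h1 (hApos m n).le
    simpa [hT] using h2
  have hsum12 : ∑ m, ∑ n,
      (((u' m - u m) + (v' n - v n)) * (Real.exp (u m + v n) * A m n)
        + ((u m - u' m) + (v n - v' n)) * (Real.exp (u' m + v' n) * A m n)) = 0 := by
    simp only [Finset.sum_add_distrib, key1, key2]
    rw [← Finset.sum_add_distrib]
    exact Finset.sum_eq_zero fun m _ => by ring
  have hTsum : ∑ m, ∑ n, T m n = 0 := by
    have e : ∀ m n, T m n =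
        -((((u' m - u m) + (v' n - v n)) * (Real.exp (u m + v n) * A m n)
          + ((u m - u' m) + (v n - v' n)) * (Real.exp (u' m + v' n) * A m n))) := by
      intro m n; simp only [hT]; ring
    calc ∑ m, ∑ n, T m n
        = -∑ m, ∑ n, (((u' m - u m) + (v' n - v n)) * (Real.exp (u m + v n) * A m n)
          + ((u m - u' m) + (v n - v' n)) * (Real.exp (u' m + v' n) * A m n)) := by
          simp only [e, Finset.sum_neg_distrib]
      _ = 0 := by rw [hsum12, neg_zero]
  have hTzero : ∀ m n, T m n = 0 := by
    intro m n
    have houter := (Finset.sum_eq_zero_iff_of_nonneg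
      (fun m _ => Finset.sum_nonneg (fun n _ => hTnonneg m n))).1 hTsum m (Finset.mem_univ m)
    exact (Finset.sum_eq_zero_iff_of_nonneg (fun n _ => hTnonneg m n)).1 houter n (Finset.mem_univ n)
  have hS : ∀ m n, u m + v n = u' m + v' n := by
    intro m n
    have h : (((u' m + v' n) - (u m + v n)) * (Real.exp (u m + v n) - Real.exp (u' m + v' n)))
        * A m n = 0 := by
      have := hTzero m n; simp only [hT, neg_eq_zero] at this; exact this
    rcases mul_eq_zero.1 h with h' | h'
    · exact scalar_key_eq h'
    · exact absurd h' (hApos m n).ne'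
  have hdpos : (0:ℝ) < d := by exact_mod_cast hd
  have hu : u = u' := by
    funext m
    have hsum : ∑ n, (u m + v n) = ∑ n, (u' m + v' n) :=
      Finset.sum_congr rfl fun n _ => hS m n
    simp only [Finset.sum_add_distrib, Finset.sum_const, Finset.card_univ, Fintype.card_fin,
      nsmul_eq_mul, hv, hv', add_zero] at hsum
    exact mul_left_cancel₀ hdpos.ne' hsum
  refine ⟨hu, ?_⟩
  funext n
  have h := hS ⟨0, hd⟩ n
  rw [hu] at h
  linarith


/-- **Generalized Sinkhorn scaling of a positive stochastic matrix.**
If `A` is a strictly positive column-stochastic matrix and `r` a strictly positive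
probability vector, then there is a unique pair of vectors `(u, v)` with
`∑ n, v n = 0` such that `T m n = e^{u m + v n} A m n` is column-stochastic with
row sums `T·𝟙 = d·r`. -/
theorem sinkhorn_scaling_exists_unique
    (d : ℕ) (hd : 1 ≤ d) (A : Matrix (Fin d) (Fin d) ℝ)
    (hApos : ∀ m n, 0 < A m n)
    (hAcol : ∀ n, ∑ m, A m n = 1)
    (r : Fin d → ℝ) (hr : ∀ n, 0 < r n) (hrsum : ∑ n, r n = 1) :
    ∃! uv : (Fin d → ℝ) × (Fin d → ℝ),
      (∑ n, uv.2 n = 0) ∧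
      (∀ m, ∑ n, Real.exp (uv.1 m + uv.2 n) * A m n = d * r m) ∧
      (∀ n, ∑ m, Real.exp (uv.1 m + uv.2 n) * A m n = 1) := by
  obtain ⟨u, v, hv, hrow, hcol⟩ := sinkhorn_exists d hd A hApos hAcol r hr hrsum
  refine ⟨(u, v), ⟨hv, hrow, hcol⟩, ?_⟩
  rintro ⟨u', v'⟩ ⟨hv', hrow', hcol'⟩
  obtain ⟨h1, h2⟩ := sinkhorn_unique d hd A hApos r u' v' u v hv' hv hrow' hrow hcol' hcol
  simp only [Prod.mk.injEq]
  exact ⟨h1, h2⟩
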